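/- For every κ ∈ (0, 1/8) there exist η > 0, c > 0 and an integer M such that for all integers n, m with M ≤ m and m ≤ c·n, and for all real numbers Q₀, Q₁, Q₂, Q₃: m^{−1} Σ_{j=⌊κm⌋}^{m} | (1 − e^{iλ_j})³ Q₃ + (1 − e^{iλ_j})² Q₂ + (1 − e^{iλ_j}) Q₁ + Q₀ |² ≥ η ( m⁶ n^{−6} Q₃² + m⁴ n^{−4} Q₂² + m² n^{−2} Q₁² + Q₀² ), where λ_j = 2πj/n. -/

import Mathlib

set_option maxHeartbeats 1000000

noncomputable def Complex.abs : AbsoluteValue ℂ ℝ where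
  toFun z := ‖z‖
  map_mul' := norm_mul
  nonneg' := norm_nonneg
  eq_zero' _ := norm_eq_zero
  add_le' := norm_add_le

@[simp] lemma Complex.abs_apply (z : ℂ) : Complex.abs z = ‖z‖ := rfl

lemma Complex.sq_abs (z : ℂ) : Complex.abs z ^ 2 = Complex.normSq z := Complex.sq_norm z

lemma Complex.abs_exp (z : ℂ) : Complex.abs (Complex.exp z) = Real.exp z.re := Complex.norm_exp z

lemma Complex.abs_ofReal (r : ℝ) : Complex.abs (r : ℂ) = |r| := Complex.norm_real r

lemma Complex.abs_exp_sub_one_le {x : ℂ} (hx : Complex.abs x ≤ 1) :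
    Complex.abs (Complex.exp x - 1) ≤ 2 * Complex.abs x := Complex.norm_exp_sub_one_le hx


private lemma chord_sq (θ : ℝ) :
    (Complex.abs (Complex.exp (Complex.I * (θ:ℂ)) - 1))^2 = 2 - 2 * Real.cos θ := by
  rw [Complex.sq_abs, mul_comm Complex.I]
  simp [Complex.normSq_apply, Complex.exp_ofReal_mul_I_re, Complex.exp_ofReal_mul_I_im]
  nlinarith [Real.sin_sq_add_cos_sq θ]

private lemma chord_lb {θ : ℝ} (h0 : 0 ≤ θ) (hπ : θ ≤ Real.pi) :
    θ/2 ≤ Complex.abs (Complex.exp (Complex.I * (θ:ℂ)) - 1) := by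
  have h2 := chord_sq θ
  have hc : Real.cos θ ≤ 1 - 2/Real.pi^2 * θ^2 :=
    Real.cos_le_one_sub_mul_cos_sq (by rwa [abs_of_nonneg h0])
  have hπ4 : Real.pi ≤ 4 := Real.pi_le_four
  have hπ0 : 0 < Real.pi := Real.pi_pos
  have habs := Complex.abs.nonneg (Complex.exp (Complex.I * (θ:ℂ)) - 1)
  have key : 1/8 ≤ 2/Real.pi^2 := by
    rw [div_le_div_iff₀ (by norm_num) (by positivity)]
    nlinarith
  have key2 : (1/8) * θ^2 ≤ (2/Real.pi^2) * θ^2 :=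
    mul_le_mul_of_nonneg_right key (sq_nonneg θ)
  have hsq : (θ/2)^2 ≤ (Complex.abs (Complex.exp (Complex.I * (θ:ℂ)) - 1))^2 := by
    rw [h2]; nlinarith
  have := Real.sqrt_le_sqrt hsq
  rwa [Real.sqrt_sq (by positivity), Real.sqrt_sq habs] at this

private lemma chord_ub {θ : ℝ} (h0 : 0 ≤ θ) (h1 : θ ≤ 1) :
    Complex.abs (1 - Complex.exp (Complex.I * (θ:ℂ))) ≤ 2*θ := by
  have habs : Complex.abs (Complex.I * (θ:ℂ)) = θ := by
    simp [abs_of_nonneg h0]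
  have h := Complex.abs_exp_sub_one_le (x := Complex.I * (θ:ℂ)) (by rw [habs]; exact h1)
  rw [habs] at h
  calc Complex.abs (1 - Complex.exp (Complex.I * (θ:ℂ)))
      = Complex.abs (Complex.exp (Complex.I * (θ:ℂ)) - 1) := Complex.abs.map_sub 1 _
    _ ≤ 2*θ := h

private lemma sep_lb {a b : ℝ} (h0 : 0 ≤ a) (hab : a ≤ b) (h : b - a ≤ Real.pi) :
    (b - a)/2 ≤ Complex.abs ((1 - Complex.exp (Complex.I * (a:ℂ))) -
      (1 - Complex.exp (Complex.I * (b:ℂ)))) := by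
  have harg : Complex.I * (a:ℂ) + Complex.I * (((b-a:ℝ)):ℂ) = Complex.I * (b:ℂ) := by
    push_cast; ring
  have key : (1 - Complex.exp (Complex.I*(a:ℂ))) - (1 - Complex.exp (Complex.I*(b:ℂ)))
      = Complex.exp (Complex.I*(a:ℂ)) * (Complex.exp (Complex.I*(((b-a:ℝ)):ℂ)) - 1) := by
    rw [mul_sub, mul_one, ← Complex.exp_add, harg]; ring
  rw [key, map_mul]
  have h1 : Complex.abs (Complex.exp (Complex.I*(a:ℂ))) = 1 := by
    rw [Complex.abs_exp]; simp
  rw [h1, one_mul]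
  exact chord_lb (by linarith) h


private lemma interp_bound (Q0 Q1 Q2 Q3 w1 w2 w3 w4 : ℂ) (d B : ℝ) (hd : 0 ≤ d)
    (hB1 : Complex.abs w1 ≤ B) (hB2 : Complex.abs w2 ≤ B)
    (hB3 : Complex.abs w3 ≤ B) (hB4 : Complex.abs w4 ≤ B)
    (h12 : d ≤ Complex.abs (w1 - w2)) (h13 : d ≤ Complex.abs (w1 - w3))
    (h14 : d ≤ Complex.abs (w1 - w4)) (h23 : d ≤ Complex.abs (w2 - w3))
    (h24 : d ≤ Complex.abs (w2 - w4)) (h34 : d ≤ Complex.abs (w3 - w4)) :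
    Complex.abs Q3 * d^6 ≤ 8*B^3 * (Complex.abs (w1^3*Q3+w1^2*Q2+w1*Q1+Q0) +
        Complex.abs (w2^3*Q3+w2^2*Q2+w2*Q1+Q0) + Complex.abs (w3^3*Q3+w3^2*Q2+w3*Q1+Q0) +
        Complex.abs (w4^3*Q3+w4^2*Q2+w4*Q1+Q0)) ∧
    Complex.abs Q2 * d^6 ≤ 24*B^4 * (Complex.abs (w1^3*Q3+w1^2*Q2+w1*Q1+Q0) +
        Complex.abs (w2^3*Q3+w2^2*Q2+w2*Q1+Q0) + Complex.abs (w3^3*Q3+w3^2*Q2+w3*Q1+Q0) +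
        Complex.abs (w4^3*Q3+w4^2*Q2+w4*Q1+Q0)) ∧
    Complex.abs Q1 * d^6 ≤ 24*B^5 * (Complex.abs (w1^3*Q3+w1^2*Q2+w1*Q1+Q0) +
        Complex.abs (w2^3*Q3+w2^2*Q2+w2*Q1+Q0) + Complex.abs (w3^3*Q3+w3^2*Q2+w3*Q1+Q0) +
        Complex.abs (w4^3*Q3+w4^2*Q2+w4*Q1+Q0)) ∧
    Complex.abs Q0 * d^6 ≤ 8*B^6 * (Complex.abs (w1^3*Q3+w1^2*Q2+w1*Q1+Q0) +
        Complex.abs (w2^3*Q3+w2^2*Q2+w2*Q1+Q0) + Complex.abs (w3^3*Q3+w3^2*Q2+w3*Q1+Q0) +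
        Complex.abs (w4^3*Q3+w4^2*Q2+w4*Q1+Q0)) := by
  set P1 := w1^3*Q3+w1^2*Q2+w1*Q1+Q0 with hP1
  set P2 := w2^3*Q3+w2^2*Q2+w2*Q1+Q0 with hP2
  set P3 := w3^3*Q3+w3^2*Q2+w3*Q1+Q0 with hP3
  set P4 := w4^3*Q3+w4^2*Q2+w4*Q1+Q0 with hP4
  set V := (w1-w2)*((w1-w3)*((w1-w4)*((w2-w3)*((w2-w4)*(w3-w4))))) with hV
  set T := Complex.abs P1 + Complex.abs P2 + Complex.abs P3 + Complex.abs P4 with hT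
  have hB : 0 ≤ B := le_trans (Complex.abs.nonneg w1) hB1
  have hT0 : 0 ≤ T := by positivity
  have hVlb : d^6 ≤ Complex.abs V := by
    rw [hV]; simp only [map_mul]
    calc d^6 = d*(d*(d*(d*(d*d)))) := by ring
      _ ≤ _ := by gcongr
  -- upper bounds on differences
  have hsub : ∀ x y : ℂ, Complex.abs x ≤ B → Complex.abs y ≤ B →
      Complex.abs (x - y) ≤ 2*B := by
    intro x y hx hy
    calc Complex.abs (x - y) ≤ Complex.abs x + Complex.abs y := by
          simpa using Complex.abs.sub_le x 0 y
      _ ≤ 2*B := by linarith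
  have u12 := hsub w1 w2 hB1 hB2
  have u13 := hsub w1 w3 hB1 hB3
  have u14 := hsub w1 w4 hB1 hB4
  have u23 := hsub w2 w3 hB2 hB3
  have u24 := hsub w2 w4 hB2 hB4
  have u34 := hsub w3 w4 hB3 hB4
  have add4 : ∀ x y z u : ℂ, Complex.abs (x+y+z+u) ≤
      Complex.abs x + Complex.abs y + Complex.abs z + Complex.abs u := by
    intro x y z u
    calc Complex.abs (x+y+z+u) ≤ Complex.abs (x+y+z) + Complex.abs u := Complex.abs.add_le _ _
      _ ≤ (Complex.abs (x+y) + Complex.abs z) + Complex.abs u :=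
          add_le_add_left (Complex.abs.add_le _ _) _
      _ ≤ _ := by
          have := Complex.abs.add_le x y
          linarith
  -- generic term bound
  have term_le : ∀ (P s x y z : ℂ) (S : ℝ), Complex.abs s ≤ S →
      Complex.abs x ≤ 2*B → Complex.abs y ≤ 2*B → Complex.abs z ≤ 2*B →
      Complex.abs (P * s * (x * (y * z))) ≤ Complex.abs P * (S * (8*B^3)) := by
    intro P s x y z S hs hx hy hz
    have hS : 0 ≤ S := le_trans (Complex.abs.nonneg s) hs
    simp only [map_mul]
    calc Complex.abs P * Complex.abs s * (Complex.abs x * (Complex.abs y * Complex.abs z))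
        ≤ Complex.abs P * S * ((2*B) * ((2*B) * (2*B))) := by
          gcongr <;> first | positivity | exact Complex.abs.nonneg _
      _ = Complex.abs P * (S * (8*B^3)) := by ring
  -- s bounds
  have s1 : Complex.abs (1:ℂ) ≤ 1 := by simp
  have sneg1 : Complex.abs (-1:ℂ) ≤ 1 := by simp
  have sum3 : ∀ x y z : ℂ, Complex.abs x ≤ B → Complex.abs y ≤ B → Complex.abs z ≤ B →
      Complex.abs (x+y+z) ≤ 3*B := by
    intro x y z hx hy hz
    have h1 := Complex.abs.add_le (x+y) z
    have h2 := Complex.abs.add_le x y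
    linarith
  have msum3 : ∀ x y z : ℂ, Complex.abs x ≤ B → Complex.abs y ≤ B → Complex.abs z ≤ B →
      Complex.abs (x*y+x*z+y*z) ≤ 3*B^2 := by
    intro x y z hx hy hz
    have h1 := Complex.abs.add_le (x*y+x*z) (y*z)
    have h2 := Complex.abs.add_le (x*y) (x*z)
    have e1 : Complex.abs (x*y) ≤ B^2 := by
      rw [map_mul]; calc Complex.abs x * Complex.abs y ≤ B*B := by
                          gcongr <;> exact Complex.abs.nonneg _
        _ = B^2 := by ring
    have e2 : Complex.abs (x*z) ≤ B^2 := by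
      rw [map_mul]; calc Complex.abs x * Complex.abs z ≤ B*B := by
                          gcongr <;> exact Complex.abs.nonneg _
        _ = B^2 := by ring
    have e3 : Complex.abs (y*z) ≤ B^2 := by
      rw [map_mul]; calc Complex.abs y * Complex.abs z ≤ B*B := by
                          gcongr <;> exact Complex.abs.nonneg _
        _ = B^2 := by ring
    linarith
  have prod3 : ∀ x y z : ℂ, Complex.abs x ≤ B → Complex.abs y ≤ B → Complex.abs z ≤ B →
      Complex.abs (x*y*z) ≤ B^3 := by
    intro x y z hx hy hz
    simp only [map_mul]
    calc Complex.abs x * Complex.abs y * Complex.abs z ≤ B*B*B := by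
          gcongr <;> exact Complex.abs.nonneg _
      _ = B^3 := by ring
  -- the four coefficient bounds, via the cleared-denominator identities
  refine ⟨?_, ?_, ?_, ?_⟩
  · have key : Q3 * V = P1 * 1 * ((w2-w3)*((w2-w4)*(w3-w4)))
        + P2 * (-1) * ((w1-w3)*((w1-w4)*(w3-w4)))
        + P3 * 1 * ((w1-w2)*((w1-w4)*(w2-w4)))
        + P4 * (-1) * ((w1-w2)*((w1-w3)*(w2-w3))) := by
      rw [hP1, hP2, hP3, hP4, hV]; ring
    calc Complex.abs Q3 * d^6 ≤ Complex.abs Q3 * Complex.abs V :=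
          mul_le_mul_of_nonneg_left hVlb (Complex.abs.nonneg _)
      _ = Complex.abs (Q3 * V) := (map_mul Complex.abs Q3 V).symm
      _ = Complex.abs (P1 * 1 * ((w2-w3)*((w2-w4)*(w3-w4)))
            + P2 * (-1) * ((w1-w3)*((w1-w4)*(w3-w4)))
            + P3 * 1 * ((w1-w2)*((w1-w4)*(w2-w4)))
            + P4 * (-1) * ((w1-w2)*((w1-w3)*(w2-w3)))) := by rw [key]
      _ ≤ _ := add4 _ _ _ _
      _ ≤ Complex.abs P1 * (1 * (8*B^3)) + Complex.abs P2 * (1 * (8*B^3))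
            + Complex.abs P3 * (1 * (8*B^3)) + Complex.abs P4 * (1 * (8*B^3)) := by
          exact add_le_add (add_le_add (add_le_add
            (term_le _ _ _ _ _ _ s1 u23 u24 u34)
            (term_le _ _ _ _ _ _ sneg1 u13 u14 u34))
            (term_le _ _ _ _ _ _ s1 u12 u14 u24))
            (term_le _ _ _ _ _ _ sneg1 u12 u13 u23)
      _ = 8*B^3 * T := by rw [hT]; ring
  · have key : Q2 * V = P1 * (-(w2+w3+w4)) * ((w2-w3)*((w2-w4)*(w3-w4)))
        + P2 * (w1+w3+w4) * ((w1-w3)*((w1-w4)*(w3-w4)))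
        + P3 * (-(w1+w2+w4)) * ((w1-w2)*((w1-w4)*(w2-w4)))
        + P4 * (w1+w2+w3) * ((w1-w2)*((w1-w3)*(w2-w3))) := by
      rw [hP1, hP2, hP3, hP4, hV]; ring
    have s2a : Complex.abs (-(w2+w3+w4)) ≤ 3*B := by
      rw [Complex.abs.map_neg]; exact sum3 _ _ _ hB2 hB3 hB4
    have s2b : Complex.abs (w1+w3+w4) ≤ 3*B := sum3 _ _ _ hB1 hB3 hB4
    have s2c : Complex.abs (-(w1+w2+w4)) ≤ 3*B := by
      rw [Complex.abs.map_neg]; exact sum3 _ _ _ hB1 hB2 hB4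
    have s2d : Complex.abs (w1+w2+w3) ≤ 3*B := sum3 _ _ _ hB1 hB2 hB3
    calc Complex.abs Q2 * d^6 ≤ Complex.abs Q2 * Complex.abs V :=
          mul_le_mul_of_nonneg_left hVlb (Complex.abs.nonneg _)
      _ = Complex.abs (Q2 * V) := (map_mul Complex.abs Q2 V).symm
      _ = Complex.abs (P1 * (-(w2+w3+w4)) * ((w2-w3)*((w2-w4)*(w3-w4)))
            + P2 * (w1+w3+w4) * ((w1-w3)*((w1-w4)*(w3-w4)))
            + P3 * (-(w1+w2+w4)) * ((w1-w2)*((w1-w4)*(w2-w4)))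
            + P4 * (w1+w2+w3) * ((w1-w2)*((w1-w3)*(w2-w3)))) := by rw [key]
      _ ≤ _ := add4 _ _ _ _
      _ ≤ Complex.abs P1 * ((3*B) * (8*B^3)) + Complex.abs P2 * ((3*B) * (8*B^3))
            + Complex.abs P3 * ((3*B) * (8*B^3)) + Complex.abs P4 * ((3*B) * (8*B^3)) := by
          exact add_le_add (add_le_add (add_le_add
            (term_le _ _ _ _ _ _ s2a u23 u24 u34)
            (term_le _ _ _ _ _ _ s2b u13 u14 u34))
            (term_le _ _ _ _ _ _ s2c u12 u14 u24))
            (term_le _ _ _ _ _ _ s2d u12 u13 u23)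
      _ = 24*B^4 * T := by rw [hT]; ring
  · have key : Q1 * V = P1 * (w2*w3+w2*w4+w3*w4) * ((w2-w3)*((w2-w4)*(w3-w4)))
        + P2 * (-(w1*w3+w1*w4+w3*w4)) * ((w1-w3)*((w1-w4)*(w3-w4)))
        + P3 * (w1*w2+w1*w4+w2*w4) * ((w1-w2)*((w1-w4)*(w2-w4)))
        + P4 * (-(w1*w2+w1*w3+w2*w3)) * ((w1-w2)*((w1-w3)*(w2-w3))) := by
      rw [hP1, hP2, hP3, hP4, hV]; ring
    have s1a : Complex.abs (w2*w3+w2*w4+w3*w4) ≤ 3*B^2 := msum3 _ _ _ hB2 hB3 hB4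
    have s1b : Complex.abs (-(w1*w3+w1*w4+w3*w4)) ≤ 3*B^2 := by
      rw [Complex.abs.map_neg]; exact msum3 _ _ _ hB1 hB3 hB4
    have s1c : Complex.abs (w1*w2+w1*w4+w2*w4) ≤ 3*B^2 := msum3 _ _ _ hB1 hB2 hB4
    have s1d : Complex.abs (-(w1*w2+w1*w3+w2*w3)) ≤ 3*B^2 := by
      rw [Complex.abs.map_neg]; exact msum3 _ _ _ hB1 hB2 hB3
    calc Complex.abs Q1 * d^6 ≤ Complex.abs Q1 * Complex.abs V :=
          mul_le_mul_of_nonneg_left hVlb (Complex.abs.nonneg _)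
      _ = Complex.abs (Q1 * V) := (map_mul Complex.abs Q1 V).symm
      _ = Complex.abs (P1 * (w2*w3+w2*w4+w3*w4) * ((w2-w3)*((w2-w4)*(w3-w4)))
            + P2 * (-(w1*w3+w1*w4+w3*w4)) * ((w1-w3)*((w1-w4)*(w3-w4)))
            + P3 * (w1*w2+w1*w4+w2*w4) * ((w1-w2)*((w1-w4)*(w2-w4)))
            + P4 * (-(w1*w2+w1*w3+w2*w3)) * ((w1-w2)*((w1-w3)*(w2-w3)))) := by rw [key]
      _ ≤ _ := add4 _ _ _ _
      _ ≤ Complex.abs P1 * ((3*B^2) * (8*B^3)) + Complex.abs P2 * ((3*B^2) * (8*B^3))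
            + Complex.abs P3 * ((3*B^2) * (8*B^3)) + Complex.abs P4 * ((3*B^2) * (8*B^3)) := by
          exact add_le_add (add_le_add (add_le_add
            (term_le _ _ _ _ _ _ s1a u23 u24 u34)
            (term_le _ _ _ _ _ _ s1b u13 u14 u34))
            (term_le _ _ _ _ _ _ s1c u12 u14 u24))
            (term_le _ _ _ _ _ _ s1d u12 u13 u23)
      _ = 24*B^5 * T := by rw [hT]; ring
  · have key : Q0 * V = P1 * (-(w2*w3*w4)) * ((w2-w3)*((w2-w4)*(w3-w4)))
        + P2 * (w1*w3*w4) * ((w1-w3)*((w1-w4)*(w3-w4)))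
        + P3 * (-(w1*w2*w4)) * ((w1-w2)*((w1-w4)*(w2-w4)))
        + P4 * (w1*w2*w3) * ((w1-w2)*((w1-w3)*(w2-w3))) := by
      rw [hP1, hP2, hP3, hP4, hV]; ring
    have s0a : Complex.abs (-(w2*w3*w4)) ≤ B^3 := by
      rw [Complex.abs.map_neg]; exact prod3 _ _ _ hB2 hB3 hB4
    have s0b : Complex.abs (w1*w3*w4) ≤ B^3 := prod3 _ _ _ hB1 hB3 hB4
    have s0c : Complex.abs (-(w1*w2*w4)) ≤ B^3 := by
      rw [Complex.abs.map_neg]; exact prod3 _ _ _ hB1 hB2 hB4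
    have s0d : Complex.abs (w1*w2*w3) ≤ B^3 := prod3 _ _ _ hB1 hB2 hB3
    calc Complex.abs Q0 * d^6 ≤ Complex.abs Q0 * Complex.abs V :=
          mul_le_mul_of_nonneg_left hVlb (Complex.abs.nonneg _)
      _ = Complex.abs (Q0 * V) := (map_mul Complex.abs Q0 V).symm
      _ = Complex.abs (P1 * (-(w2*w3*w4)) * ((w2-w3)*((w2-w4)*(w3-w4)))
            + P2 * (w1*w3*w4) * ((w1-w3)*((w1-w4)*(w3-w4)))
            + P3 * (-(w1*w2*w4)) * ((w1-w2)*((w1-w4)*(w2-w4)))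
            + P4 * (w1*w2*w3) * ((w1-w2)*((w1-w3)*(w2-w3)))) := by rw [key]
      _ ≤ _ := add4 _ _ _ _
      _ ≤ Complex.abs P1 * ((B^3) * (8*B^3)) + Complex.abs P2 * ((B^3) * (8*B^3))
            + Complex.abs P3 * ((B^3) * (8*B^3)) + Complex.abs P4 * ((B^3) * (8*B^3)) := by
          exact add_le_add (add_le_add (add_le_add
            (term_le _ _ _ _ _ _ s0a u23 u24 u34)
            (term_le _ _ _ _ _ _ s0b u13 u14 u34))
            (term_le _ _ _ _ _ _ s0c u12 u14 u24))
            (term_le _ _ _ _ _ _ s0d u12 u13 u23)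
      _ = 8*B^6 * T := by rw [hT]; ring

private lemma four_sq (a b c d : ℝ) : (a+b+c+d)^2 ≤ 4*(a^2+b^2+c^2+d^2) := by
  nlinarith [sq_nonneg (a-b), sq_nonneg (a-c), sq_nonneg (a-d),
    sq_nonneg (b-c), sq_nonneg (b-d), sq_nonneg (c-d)]

private lemma quad_bound (Q₀ Q₁ Q₂ Q₃ u θ1 θ2 θ3 θ4 : ℝ) (hu : 0 < u)
    (h1 : 0 ≤ θ1) (h2 : 0 ≤ θ2) (h3 : 0 ≤ θ3) (h4 : 0 ≤ θ4)
    (hub1 : θ1 ≤ 1) (hub2 : θ2 ≤ 1) (hub3 : θ3 ≤ 1) (hub4 : θ4 ≤ 1)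
    (hB1 : θ1 ≤ 8*u) (hB2 : θ2 ≤ 8*u) (hB3 : θ3 ≤ 8*u) (hB4 : θ4 ≤ 8*u)
    (s12 : u/8 ≤ θ2 - θ1) (s13 : u/8 ≤ θ3 - θ1) (s14 : u/8 ≤ θ4 - θ1)
    (s23 : u/8 ≤ θ3 - θ2) (s24 : u/8 ≤ θ4 - θ2) (s34 : u/8 ≤ θ4 - θ3) :
    u^6*Q₃^2 + u^4*Q₂^2 + u^2*Q₁^2 + Q₀^2 ≤
      (2:ℝ)^110 *
        ((Complex.abs ((1 - Complex.exp (Complex.I * (θ1:ℂ)))^3 * (Q₃:ℂ) +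
            (1 - Complex.exp (Complex.I * (θ1:ℂ)))^2 * (Q₂:ℂ) +
            (1 - Complex.exp (Complex.I * (θ1:ℂ))) * (Q₁:ℂ) + (Q₀:ℂ)))^2 +
         (Complex.abs ((1 - Complex.exp (Complex.I * (θ2:ℂ)))^3 * (Q₃:ℂ) +
            (1 - Complex.exp (Complex.I * (θ2:ℂ)))^2 * (Q₂:ℂ) +
            (1 - Complex.exp (Complex.I * (θ2:ℂ))) * (Q₁:ℂ) + (Q₀:ℂ)))^2 +
         (Complex.abs ((1 - Complex.exp (Complex.I * (θ3:ℂ)))^3 * (Q₃:ℂ) +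
            (1 - Complex.exp (Complex.I * (θ3:ℂ)))^2 * (Q₂:ℂ) +
            (1 - Complex.exp (Complex.I * (θ3:ℂ))) * (Q₁:ℂ) + (Q₀:ℂ)))^2 +
         (Complex.abs ((1 - Complex.exp (Complex.I * (θ4:ℂ)))^3 * (Q₃:ℂ) +
            (1 - Complex.exp (Complex.I * (θ4:ℂ)))^2 * (Q₂:ℂ) +
            (1 - Complex.exp (Complex.I * (θ4:ℂ))) * (Q₁:ℂ) + (Q₀:ℂ)))^2) := by
  have hπ3 : (3:ℝ) ≤ Real.pi := by linarith [Real.pi_gt_three]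
  set w1 := 1 - Complex.exp (Complex.I * (θ1:ℂ)) with hw1
  set w2 := 1 - Complex.exp (Complex.I * (θ2:ℂ)) with hw2
  set w3 := 1 - Complex.exp (Complex.I * (θ3:ℂ)) with hw3
  set w4 := 1 - Complex.exp (Complex.I * (θ4:ℂ)) with hw4
  -- B bounds
  have hwB1 : Complex.abs w1 ≤ 16*u := le_trans (chord_ub h1 hub1) (by linarith)
  have hwB2 : Complex.abs w2 ≤ 16*u := le_trans (chord_ub h2 hub2) (by linarith)
  have hwB3 : Complex.abs w3 ≤ 16*u := le_trans (chord_ub h3 hub3) (by linarith)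
  have hwB4 : Complex.abs w4 ≤ 16*u := le_trans (chord_ub h4 hub4) (by linarith)
  -- separations
  have hs12 : u/16 ≤ Complex.abs (w1 - w2) :=
    le_trans (by linarith) (sep_lb h1 (by linarith) (by linarith))
  have hs13 : u/16 ≤ Complex.abs (w1 - w3) :=
    le_trans (by linarith) (sep_lb h1 (by linarith) (by linarith))
  have hs14 : u/16 ≤ Complex.abs (w1 - w4) :=
    le_trans (by linarith) (sep_lb h1 (by linarith) (by linarith))
  have hs23 : u/16 ≤ Complex.abs (w2 - w3) :=
    le_trans (by linarith) (sep_lb h2 (by linarith) (by linarith))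
  have hs24 : u/16 ≤ Complex.abs (w2 - w4) :=
    le_trans (by linarith) (sep_lb h2 (by linarith) (by linarith))
  have hs34 : u/16 ≤ Complex.abs (w3 - w4) :=
    le_trans (by linarith) (sep_lb h3 (by linarith) (by linarith))
  obtain ⟨b3, b2, b1, b0⟩ := interp_bound (Q₀:ℂ) (Q₁:ℂ) (Q₂:ℂ) (Q₃:ℂ) w1 w2 w3 w4
    (u/16) (16*u) (by positivity) hwB1 hwB2 hwB3 hwB4 hs12 hs13 hs14 hs23 hs24 hs34
  rw [Complex.abs_ofReal] at b3 b2 b1 b0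
  rw [div_pow] at b3 b2 b1 b0
  set A1 := Complex.abs (w1^3*(Q₃:ℂ)+w1^2*(Q₂:ℂ)+w1*(Q₁:ℂ)+(Q₀:ℂ)) with hA1
  set A2 := Complex.abs (w2^3*(Q₃:ℂ)+w2^2*(Q₂:ℂ)+w2*(Q₁:ℂ)+(Q₀:ℂ)) with hA2
  set A3 := Complex.abs (w3^3*(Q₃:ℂ)+w3^2*(Q₂:ℂ)+w3*(Q₁:ℂ)+(Q₀:ℂ)) with hA3
  set A4 := Complex.abs (w4^3*(Q₃:ℂ)+w4^2*(Q₂:ℂ)+w4*(Q₁:ℂ)+(Q₀:ℂ)) with hA4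
  have hA1' : 0 ≤ A1 := Complex.abs.nonneg _
  have hA2' : 0 ≤ A2 := Complex.abs.nonneg _
  have hA3' : 0 ≤ A3 := Complex.abs.nonneg _
  have hA4' : 0 ≤ A4 := Complex.abs.nonneg _
  clear_value A1 A2 A3 A4
  set S := A1 + A2 + A3 + A4 with hS
  have hS0 : 0 ≤ S := by positivity
  -- per-coefficient bounds with u powers cancelled
  have c3 : |Q₃| * u^3 ≤ 2^39 * S := by
    apply le_of_mul_le_mul_right ?_ (pow_pos hu 3)
    calc |Q₃| * u^3 * u^3 = |Q₃| * (u^6/16^6) * 16^6 := by ring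
      _ ≤ (8*(16*u)^3*S) * 16^6 := by gcongr
      _ = 2^39 * S * u^3 := by ring
  have c2 : |Q₂| * u^2 ≤ (24*2^40) * S := by
    apply le_of_mul_le_mul_right ?_ (pow_pos hu 4)
    calc |Q₂| * u^2 * u^4 = |Q₂| * (u^6/16^6) * 16^6 := by ring
      _ ≤ (24*(16*u)^4*S) * 16^6 := by gcongr
      _ = (24*2^40) * S * u^4 := by ring
  have c1 : |Q₁| * u ≤ (24*2^44) * S := by
    apply le_of_mul_le_mul_right ?_ (pow_pos hu 5)
    calc |Q₁| * u * u^5 = |Q₁| * (u^6/16^6) * 16^6 := by ring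
      _ ≤ (24*(16*u)^5*S) * 16^6 := by gcongr
      _ = (24*2^44) * S * u^5 := by ring
  have c0 : |Q₀| ≤ 2^51 * S := by
    apply le_of_mul_le_mul_right ?_ (pow_pos hu 6)
    calc |Q₀| * u^6 = |Q₀| * (u^6/16^6) * 16^6 := by ring
      _ ≤ (8*(16*u)^6*S) * 16^6 := by gcongr
      _ = 2^51 * S * u^6 := by ring
  -- squares
  have q3 : u^6*Q₃^2 ≤ 2^78 * S^2 := by
    have := pow_le_pow_left₀ (by positivity) c3 2
    calc u^6*Q₃^2 = (|Q₃| * u^3)^2 := by rw [mul_pow, sq_abs]; ring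
      _ ≤ (2^39*S)^2 := this
      _ = 2^78 * S^2 := by ring
  have q2 : u^4*Q₂^2 ≤ 576*2^80 * S^2 := by
    have := pow_le_pow_left₀ (by positivity) c2 2
    calc u^4*Q₂^2 = (|Q₂| * u^2)^2 := by rw [mul_pow, sq_abs]; ring
      _ ≤ ((24*2^40)*S)^2 := this
      _ = 576*2^80 * S^2 := by ring
  have q1 : u^2*Q₁^2 ≤ 576*2^88 * S^2 := by
    have := pow_le_pow_left₀ (by positivity) c1 2
    calc u^2*Q₁^2 = (|Q₁| * u)^2 := by rw [mul_pow, sq_abs]; ring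
      _ ≤ ((24*2^44)*S)^2 := this
      _ = 576*2^88 * S^2 := by ring
  have q0 : Q₀^2 ≤ 2^102 * S^2 := by
    have := pow_le_pow_left₀ (by positivity) c0 2
    calc Q₀^2 = |Q₀|^2 := (sq_abs _).symm
      _ ≤ (2^51*S)^2 := this
      _ = 2^102 * S^2 := by ring
  have hT2 : S^2 ≤ 4*(A1^2+A2^2+A3^2+A4^2) := by
    rw [hS]; exact four_sq A1 A2 A3 A4
  have hAA : 0 ≤ A1^2+A2^2+A3^2+A4^2 := by positivity
  calc u^6*Q₃^2 + u^4*Q₂^2 + u^2*Q₁^2 + Q₀^2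
      ≤ 2^78*S^2 + 576*2^80*S^2 + 576*2^88*S^2 + 2^102*S^2 :=
        add_le_add (add_le_add (add_le_add q3 q2) q1) q0
    _ = (2^78 + 576*2^80 + 576*2^88 + 2^102)*S^2 := by ring
    _ ≤ (2^78 + 576*2^80 + 576*2^88 + 2^102)*(4*(A1^2+A2^2+A3^2+A4^2)) :=
        mul_le_mul_of_nonneg_left hT2 (by norm_num)
    _ = (4*(2^78 + 576*2^80 + 576*2^88 + 2^102))*(A1^2+A2^2+A3^2+A4^2) := by ring
    _ ≤ 2^110*(A1^2+A2^2+A3^2+A4^2) := mul_le_mul_of_nonneg_right (by norm_num) hAA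


/-- Lemma 5.10(a): deterministic anti-concentration lower bound, with `λ_j = 2πj/n`:
`m⁻¹ ∑_{j=⌊κm⌋}^m |(1−e^{iλ_j})³Q₃ + (1−e^{iλ_j})²Q₂ + (1−e^{iλ_j})Q₁ + Q₀|²
  ≥ η (m⁶n⁻⁶Q₃² + m⁴n⁻⁴Q₂² + m²n⁻²Q₁² + Q₀²)`,
where `η, c, M` do not depend on `Q₀,…,Q₃`. -/
theorem trig_poly_anticoncentration (κ : ℝ) (hκ : κ ∈ Set.Ioo (0 : ℝ) (1/8)) :
    ∃ η > 0, ∃ c > 0, ∃ M : ℕ, ∀ n m : ℕ, M ≤ m → (m : ℝ) ≤ c * n →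
      ∀ Q₀ Q₁ Q₂ Q₃ : ℝ,
        η * ((m : ℝ) ^ 6 / (n : ℝ) ^ 6 * Q₃ ^ 2 + (m : ℝ) ^ 4 / (n : ℝ) ^ 4 * Q₂ ^ 2 +
            (m : ℝ) ^ 2 / (n : ℝ) ^ 2 * Q₁ ^ 2 + Q₀ ^ 2) ≤
        (m : ℝ)⁻¹ * ∑ j ∈ Finset.Icc ⌊κ * m⌋₊ m,
          (‖
            ((1 - Complex.exp (Complex.I * ((2 * Real.pi * j / n : ℝ) : ℂ))) ^ 3 * (Q₃ : ℂ) +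
             (1 - Complex.exp (Complex.I * ((2 * Real.pi * j / n : ℝ) : ℂ))) ^ 2 * (Q₂ : ℂ) +
             (1 - Complex.exp (Complex.I * ((2 * Real.pi * j / n : ℝ) : ℂ))) * (Q₁ : ℂ) +
             (Q₀ : ℂ))‖) ^ 2 := by
  obtain ⟨hκ0, hκ8⟩ := hκ
  refine ⟨((2:ℝ)^115)⁻¹, by positivity, 1/8, by norm_num, 32, ?_⟩
  intro n m hm hmn Q₀ Q₁ Q₂ Q₃
  have hm32 : (32:ℝ) ≤ (m:ℝ) := by exact_mod_cast hm
  have hm0 : (0:ℝ) < (m:ℝ) := by linarith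
  have hn : (0:ℝ) < (n:ℝ) := by
    by_contra h
    push_neg at h
    have h0 : (n:ℝ) = 0 := le_antisymm h (Nat.cast_nonneg n)
    rw [h0] at hmn; linarith
  have hπ0 := Real.pi_pos
  have hπ4 := Real.pi_le_four
  have hπ3 : (3:ℝ) ≤ Real.pi := by linarith [Real.pi_gt_three]
  set a := ⌊κ * (m:ℝ)⌋₊ with ha
  set L := m / 16 with hL
  have hL32 : (m:ℝ)/32 ≤ (L:ℝ) := by
    have h1 : m ≤ 16*L + 15 := by omega
    have h2 : ((m:ℕ):ℝ) ≤ ((16*L + 15 : ℕ):ℝ) := Nat.cast_le.mpr h1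
    push_cast at h2; linarith
  have hL16 : (L:ℝ) ≤ (m:ℝ)/16 := by
    have h1 : 16*L ≤ m := by omega
    have h2 : ((16*L:ℕ):ℝ) ≤ (m:ℝ) := Nat.cast_le.mpr h1
    push_cast at h2; linarith
  have haR : (a:ℝ) ≤ (m:ℝ)/8 := by
    have h1 : (a:ℝ) ≤ κ * m := Nat.floor_le (mul_nonneg hκ0.le (Nat.cast_nonneg m))
    have h2 : κ * m ≤ (1/8) * m := mul_le_mul_of_nonneg_right hκ8.le (Nat.cast_nonneg m)
    linarith
  have hfit : a + 4*L ≤ m := by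
    have h3 : ((a + 4*L : ℕ):ℝ) ≤ (m:ℝ) := by push_cast; linarith
    exact_mod_cast h3
  set F : ℕ → ℝ := fun j =>
    (Complex.abs
      ((1 - Complex.exp (Complex.I * ((2 * Real.pi * j / n : ℝ) : ℂ))) ^ 3 * (Q₃ : ℂ) +
       (1 - Complex.exp (Complex.I * ((2 * Real.pi * j / n : ℝ) : ℂ))) ^ 2 * (Q₂ : ℂ) +
       (1 - Complex.exp (Complex.I * ((2 * Real.pi * j / n : ℝ) : ℂ))) * (Q₁ : ℂ) +
       (Q₀ : ℂ))) ^ 2 with hF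
  set Sq := (m:ℝ)^6/(n:ℝ)^6*Q₃^2 + (m:ℝ)^4/(n:ℝ)^4*Q₂^2 + (m:ℝ)^2/(n:ℝ)^2*Q₁^2 + Q₀^2
    with hSq
  -- the per-quadruple lower bound
  have hquad : ∀ t, t < L →
      Sq ≤ (2:ℝ)^110 * (F (a+t) + F (a+L+t) + F (a+2*L+t) + F (a+3*L+t)) := by
    intro t ht
    set u : ℝ := (m:ℝ)/(n:ℝ) with hu
    have hu0 : 0 < u := div_pos hm0 hn
    have hu8 : u ≤ 1/8 := by rw [hu, div_le_iff₀ hn]; linarith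
    have hπu : Real.pi * u ≤ 4 * u := mul_le_mul_of_nonneg_right hπ4 hu0.le
    have hθ0 : ∀ j : ℕ, 0 ≤ 2*Real.pi*(j:ℝ)/(n:ℝ) := fun j => by positivity
    have hθub : ∀ j : ℕ, j ≤ m → 2*Real.pi*(j:ℝ)/(n:ℝ) ≤ 2*Real.pi*u := by
      intro j hj
      have hjm : (j:ℝ) ≤ m := Nat.cast_le.mpr hj
      rw [hu, ← mul_div_assoc]
      gcongr
    have hub1 : ∀ j : ℕ, j ≤ m → 2*Real.pi*(j:ℝ)/(n:ℝ) ≤ 1 := by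
      intro j hj
      have := hθub j hj
      linarith
    have hBu : ∀ j : ℕ, j ≤ m → 2*Real.pi*(j:ℝ)/(n:ℝ) ≤ 8*u := by
      intro j hj
      have := hθub j hj
      linarith
    have hgap : ∀ i j : ℕ, i + L ≤ j →
        u/8 ≤ 2*Real.pi*(j:ℝ)/(n:ℝ) - 2*Real.pi*(i:ℝ)/(n:ℝ) := by
      intro i j hij
      have hijR : (i:ℝ) + L ≤ j := by exact_mod_cast hij
      have hd : 2*Real.pi*(j:ℝ)/(n:ℝ) - 2*Real.pi*(i:ℝ)/(n:ℝ)
          = 2*Real.pi*((j:ℝ)-i)/(n:ℝ) := by ring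
      rw [hd]
      have h1 : 2*Real.pi*(L:ℝ)/(n:ℝ) ≤ 2*Real.pi*((j:ℝ)-i)/(n:ℝ) := by
        gcongr; linarith
      have h2 : 2*Real.pi*((m:ℝ)/32)/(n:ℝ) ≤ 2*Real.pi*(L:ℝ)/(n:ℝ) := by gcongr
      have h3 : 2*Real.pi*((m:ℝ)/32)/(n:ℝ) = (Real.pi/16)*u := by rw [hu]; ring
      have h4 : (3:ℝ)/16*u ≤ (Real.pi/16)*u := by
        apply mul_le_mul_of_nonneg_right ?_ hu0.le
        linarith
      linarith
    have hj1 : a + t ≤ m := by omega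
    have hj2 : a + L + t ≤ m := by omega
    have hj3 : a + 2*L + t ≤ m := by omega
    have hj4 : a + 3*L + t ≤ m := by omega
    have key := quad_bound Q₀ Q₁ Q₂ Q₃ u
      (2*Real.pi*(((a+t : ℕ)):ℝ)/(n:ℝ)) (2*Real.pi*(((a+L+t : ℕ)):ℝ)/(n:ℝ))
      (2*Real.pi*(((a+2*L+t : ℕ)):ℝ)/(n:ℝ)) (2*Real.pi*(((a+3*L+t : ℕ)):ℝ)/(n:ℝ))
      hu0 (hθ0 _) (hθ0 _) (hθ0 _) (hθ0 _)
      (hub1 _ hj1) (hub1 _ hj2) (hub1 _ hj3) (hub1 _ hj4)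
      (hBu _ hj1) (hBu _ hj2) (hBu _ hj3) (hBu _ hj4)
      (hgap _ _ (by omega)) (hgap _ _ (by omega)) (hgap _ _ (by omega))
      (hgap _ _ (by omega)) (hgap _ _ (by omega)) (hgap _ _ (by omega))
    have hu6 : (m:ℝ)^6/(n:ℝ)^6 = u^6 := by rw [hu, div_pow]
    have hu4 : (m:ℝ)^4/(n:ℝ)^4 = u^4 := by rw [hu, div_pow]
    have hu2 : (m:ℝ)^2/(n:ℝ)^2 = u^2 := by rw [hu, div_pow]
    rw [hSq, hu6, hu4, hu2]
    simpa only [hF] using key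
  -- summing up
  have hF0 : ∀ j, 0 ≤ F j := by
    intro j
    simp only [hF]
    positivity
  have hIcoIcc : Finset.Ico a (a+4*L) ⊆ Finset.Icc a m := by
    intro x hx
    rw [Finset.mem_Ico] at hx
    rw [Finset.mem_Icc]
    omega
  have hs1 : ∑ j ∈ Finset.Ico a (a+4*L), F j ≤ ∑ j ∈ Finset.Icc a m, F j :=
    Finset.sum_le_sum_of_subset_of_nonneg hIcoIcc (fun j _ _ => hF0 j)
  have hsplit : ∑ j ∈ Finset.Ico a (a+4*L), F j
      = ∑ t ∈ Finset.range L, F (a+t) + ∑ t ∈ Finset.range L, F (a+L+t)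
        + ∑ t ∈ Finset.range L, F (a+2*L+t) + ∑ t ∈ Finset.range L, F (a+3*L+t) := by
    rw [← Finset.sum_Ico_consecutive F (show a ≤ a+L by omega)
          (show a+L ≤ a+4*L by omega),
        ← Finset.sum_Ico_consecutive F (show a+L ≤ a+2*L by omega)
          (show a+2*L ≤ a+4*L by omega),
        ← Finset.sum_Ico_consecutive F (show a+2*L ≤ a+3*L by omega)
          (show a+3*L ≤ a+4*L by omega),
        Finset.sum_Ico_eq_sum_range, Finset.sum_Ico_eq_sum_range,
        Finset.sum_Ico_eq_sum_range, Finset.sum_Ico_eq_sum_range]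
    have r1 : a + L - a = L := by omega
    have r2 : a + 2*L - (a+L) = L := by omega
    have r3 : a + 3*L - (a+2*L) = L := by omega
    have r4 : a + 4*L - (a+3*L) = L := by omega
    rw [r1, r2, r3, r4]
    ring
  have hsum : (L:ℝ) * Sq ≤ (2:ℝ)^110 * ∑ j ∈ Finset.Ico a (a+4*L), F j := by
    rw [hsplit]
    calc (L:ℝ)*Sq = ∑ _t ∈ Finset.range L, Sq := by
          rw [Finset.sum_const, Finset.card_range, nsmul_eq_mul]
      _ ≤ ∑ t ∈ Finset.range L, (2:ℝ)^110*(F (a+t) + F (a+L+t) + F (a+2*L+t) + F (a+3*L+t)) :=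
          Finset.sum_le_sum (fun t ht => hquad t (Finset.mem_range.mp ht))
      _ = (2:ℝ)^110 * ∑ t ∈ Finset.range L, (F (a+t) + F (a+L+t) + F (a+2*L+t) + F (a+3*L+t)) := by
          rw [← Finset.mul_sum]
      _ = _ := by
          rw [Finset.sum_add_distrib, Finset.sum_add_distrib, Finset.sum_add_distrib]
  have hSq0 : 0 ≤ Sq := by rw [hSq]; positivity
  have c1 : (L:ℝ)*Sq*((2:ℝ)^110)⁻¹ ≤ ∑ j ∈ Finset.Ico a (a+4*L), F j := by
    have h := mul_le_mul_of_nonneg_right hsum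
      (by positivity : (0:ℝ) ≤ ((2:ℝ)^110)⁻¹)
    calc (L:ℝ)*Sq*((2:ℝ)^110)⁻¹
        ≤ ((2:ℝ)^110 * ∑ j ∈ Finset.Ico a (a+4*L), F j)*((2:ℝ)^110)⁻¹ := h
      _ = ∑ j ∈ Finset.Ico a (a+4*L), F j := by
          field_simp
  have h2115 : ((2:ℝ)^115) = 32*2^110 := by norm_num
  calc ((2:ℝ)^115)⁻¹ * Sq
      = (m:ℝ)⁻¹ * ((m:ℝ)/32*Sq*((2:ℝ)^110)⁻¹) := by
        rw [h2115]
        field_simp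
    _ ≤ (m:ℝ)⁻¹ * ((L:ℝ)*Sq*((2:ℝ)^110)⁻¹) := by
        apply mul_le_mul_of_nonneg_left ?_ (by positivity)
        apply mul_le_mul_of_nonneg_right ?_ (by positivity)
        exact mul_le_mul_of_nonneg_right hL32 hSq0
    _ ≤ (m:ℝ)⁻¹ * ∑ j ∈ Finset.Ico a (a+4*L), F j :=
        mul_le_mul_of_nonneg_left c1 (by positivity)
    _ ≤ (m:ℝ)⁻¹ * ∑ j ∈ Finset.Icc a m, F j :=
        mul_le_mul_of_nonneg_left hs1 (by positivity)
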